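/- The function f(z) = log(z) (principal branch, cut along (−∞,0]) admits the Nevanlinna integral representation log(z) = ∫_{−∞}^0 (1/(λ−z) − λ/(λ²+1)) dλ for z ∈ ℂ \ (−∞,0]. -/

import Mathlib

open MeasureTheory Filter Complex Set Real

theorem stmt8 (z : ℂ) (hz : ¬(z.im = 0 ∧ z.re ≤ 0)) :
    Complex.log z
      = ∫ lam in Set.Iic (0 : ℝ),
          (1 / ((lam : ℂ) - z) - (lam : ℂ) / ((lam : ℂ) ^ 2 + 1)) := by
  -- basic facts
  have hzre : z.im = 0 → 0 < z.re := by
    intro h; by_contra h'; exact hz ⟨h, le_of_not_gt h'⟩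
  -- lower bound on |t - z| for t ≤ 0
  obtain ⟨c, hc0, hc⟩ : ∃ c > 0, ∀ t : ℝ, t ≤ 0 → c ≤ ‖((t:ℂ) - z)‖ := by
    rcases eq_or_ne z.im 0 with him | him
    · refine ⟨z.re, hzre him, fun t ht => ?_⟩
      have h1 : |((t:ℂ) - z).re| ≤ ‖((t:ℂ) - z)‖ := Complex.abs_re_le_norm _
      have : ((t:ℂ) - z).re = t - z.re := by simp
      rw [this] at h1
      have h2 : z.re - t ≤ |t - z.re| := by
        have := neg_le_abs (t - z.re); rw [neg_sub] at this; exact this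
      linarith
    · refine ⟨|z.im|, abs_pos.2 him, fun t ht => ?_⟩
      have h1 : |((t:ℂ) - z).im| ≤ ‖((t:ℂ) - z)‖ := Complex.abs_im_le_norm _
      have : ((t:ℂ) - z).im = -z.im := by simp
      rw [this, abs_neg] at h1; exact h1
  have hne : ∀ t : ℝ, t ≤ 0 → (t:ℂ) - z ≠ 0 := by
    intro t ht h
    have h2 := hc t ht
    rw [h] at h2
    simp at h2
    linarith
  -- the antiderivative
  set G : ℝ → ℂ := fun t =>
    Complex.log ((t:ℂ) - z) - (1/2) * Complex.log ((t:ℂ) - I)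
      - (1/2) * Complex.log ((t:ℂ) + I) with hG
  set f : ℝ → ℂ := fun t => 1 / ((t : ℂ) - z) - (t : ℂ) / ((t : ℂ) ^ 2 + 1) with hf
  -- derivative
  have hderiv : ∀ t ∈ Iic (0:ℝ), HasDerivAt G (f t) t := by
    intro t ht
    simp only [mem_Iic] at ht
    have hbase : ∀ w : ℂ, ((t:ℂ) - w) ∈ Complex.slitPlane →
        HasDerivAt (fun s : ℝ => Complex.log ((s:ℂ) - w)) (((t:ℂ) - w)⁻¹) t := by
      intro w hw
      have h1 : HasDerivAt (fun u : ℂ => Complex.log (u - w)) (((t:ℂ) - w)⁻¹) ((t:ℂ)) := by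
        have := (Complex.hasDerivAt_log hw).comp (t:ℂ)
          ((hasDerivAt_id ((t:ℂ))).sub_const w)
        simpa [Function.comp_def] using this
      exact h1.comp_ofReal
    have hI1 : HasDerivAt (fun s : ℝ => Complex.log ((s:ℂ) - I)) (((t:ℂ) - I)⁻¹) t :=
      hbase I (Or.inr (by simp))
    have hI2 : HasDerivAt (fun s : ℝ => Complex.log ((s:ℂ) + I)) (((t:ℂ) + I)⁻¹) t := by
      have := hbase (-I) (Or.inr (by simp))
      simpa [sub_neg_eq_add] using this
    have hz1 : HasDerivAt (fun s : ℝ => Complex.log ((s:ℂ) - z)) (((t:ℂ) - z)⁻¹) t := by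
      rcases eq_or_ne z.im 0 with him | him
      · -- z is a positive real; t - z is negative real
        have hzr : 0 < z.re := hzre him
        have hzeq : z = (z.re : ℂ) := Complex.ext (by simp) (by simp [him])
        have hev : (fun s : ℝ => Complex.log ((s:ℂ) - z))
            =ᶠ[nhds t] fun s : ℝ => (Real.log (z.re - s) : ℂ) + (Real.pi : ℂ) * I := by
          have hmem : Iio z.re ∈ nhds t := Iio_mem_nhds (by linarith)
          filter_upwards [hmem] with s hs
          have hs0 : s - z.re < 0 := by simpa [sub_neg] using hs
          have : ((s:ℂ) - z) = ((s - z.re : ℝ) : ℂ) := by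
            apply Complex.ext <;> simp [him]
          rw [this]
          rw [Complex.log]
          have habs : ‖((s - z.re : ℝ) : ℂ)‖ = z.re - s := by
            rw [Complex.norm_real, Real.norm_eq_abs, abs_of_neg hs0]; ring
          rw [habs, Complex.arg_ofReal_of_neg hs0]
        have hd : HasDerivAt (fun s : ℝ => (Real.log (z.re - s) : ℂ) + (Real.pi : ℂ) * I)
            (((t:ℂ) - z)⁻¹) t := by
          have h1 : HasDerivAt (fun s : ℝ => z.re - s) (-1) t := by
            simpa using (hasDerivAt_id t).const_sub z.re
          have h2 : HasDerivAt (fun s : ℝ => Real.log (z.re - s)) ((z.re - t)⁻¹ * (-1)) t :=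
            (Real.hasDerivAt_log (by linarith)).comp t h1
          have h3 := (h2.ofReal_comp).add_const ((Real.pi : ℂ) * I)
          refine h3.congr_deriv ?_
          symm
          have hzt : (t:ℂ) - z = ((t - z.re : ℝ) : ℂ) := by
            apply Complex.ext <;> simp [him]
          rw [hzt, ← Complex.ofReal_inv]
          norm_cast
          have hne' : t - z.re ≠ 0 := by intro h; rw [sub_eq_zero] at h; linarith
          have hne'' : z.re - t ≠ 0 := by intro h; rw [sub_eq_zero] at h; linarith
          field_simp
          rw [Int.cast_negSucc]; ring
        exact hd.congr_of_eventuallyEq hev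
      · exact hbase z (Or.inr (by simpa using him))
    have hcomb := (hz1.sub (hI1.const_mul (1/2 : ℂ))).sub (hI2.const_mul (1/2 : ℂ))
    have heq : ((t:ℂ) - z)⁻¹ - (1/2 : ℂ) * ((t:ℂ) - I)⁻¹ - (1/2 : ℂ) * ((t:ℂ) + I)⁻¹ = f t := by
      have h1 : (t:ℂ) - z ≠ 0 := hne t ht
      have h2 : (t:ℂ) - I ≠ 0 := by
        intro h; have := congrArg Complex.im h; simpa using this
      have h3 : (t:ℂ) + I ≠ 0 := by
        intro h; have := congrArg Complex.im h; simpa using this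
      have h4 : ((t:ℂ))^2 + 1 = ((t:ℂ) - I) * ((t:ℂ) + I) := by
        have := Complex.I_sq; linear_combination this
      rw [hf]
      field_simp [h4]
      linear_combination (2*(t:ℂ)*z - 2*(t:ℂ)^2) * Complex.I_sq
    rw [← heq]
    exact hcomb
  -- integrability
  have hint : IntegrableOn f (Iic (0:ℝ)) := by
    set M : ℝ := ‖z‖ + ‖(1 + z^2)‖ / c with hM
    have hMnn : 0 ≤ M := by positivity
    have hbound : ∀ t : ℝ, t ≤ 0 → ‖f t‖ ≤ M * (1 + t^2)⁻¹ := by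
      intro t ht
      have h1 : (t:ℂ) - z ≠ 0 := hne t ht
      have h4 : ((t:ℂ))^2 + 1 ≠ 0 := by
        intro h
        have h2 : (t:ℂ) - I ≠ 0 := by
          intro h; have := congrArg Complex.im h; simpa using this
        have h3 : (t:ℂ) + I ≠ 0 := by
          intro h; have := congrArg Complex.im h; simpa using this
        have h5 : ((t:ℂ))^2 + 1 = ((t:ℂ) - I) * ((t:ℂ) + I) := by
          have := Complex.I_sq; linear_combination this
        rw [h5] at h; exact (mul_ne_zero h2 h3) h
      have key : f t = (1 + t * z) / (((t:ℂ) - z) * ((t:ℂ)^2 + 1)) := by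
        rw [hf]; field_simp; ring
      rw [key]
      have hnum : ‖(1 + (t:ℂ) * z)‖ ≤ ‖((t:ℂ) - z)‖ * M := by
        have hdecomp : 1 + (t:ℂ) * z = ((t:ℂ) - z) * z + (1 + z^2) := by ring
        rw [hdecomp]
        calc ‖(((t:ℂ) - z) * z + (1 + z^2))‖
            ≤ ‖(((t:ℂ) - z) * z)‖ + ‖(1 + z^2)‖ := norm_add_le _ _
          _ = ‖((t:ℂ) - z)‖ * ‖z‖ + ‖(1 + z^2)‖ := by
              rw [norm_mul]
          _ ≤ ‖((t:ℂ) - z)‖ * ‖z‖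
              + ‖((t:ℂ) - z)‖ * (‖(1 + z^2)‖ / c) := by
              gcongr
              calc ‖(1 + z^2)‖ = c * (‖(1 + z^2)‖ / c) := by
                    field_simp
                _ ≤ ‖((t:ℂ) - z)‖ * (‖(1 + z^2)‖ / c) := by
                    have := hc t ht
                    gcongr
          _ = ‖((t:ℂ) - z)‖ * M := by rw [hM]; ring
      have habs2 : ‖(((t:ℂ))^2 + 1)‖ = 1 + t^2 := by
        have : ((t:ℂ))^2 + 1 = (((t^2 + 1 : ℝ)) : ℂ) := by push_cast; ring
        rw [this, Complex.norm_real, Real.norm_eq_abs, abs_of_pos (by positivity)]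
        ring
      have hpos2 : (0:ℝ) < 1 + t^2 := by positivity
      have habspos : 0 < ‖((t:ℂ) - z)‖ := (norm_pos_iff.mpr h1)
      rw [norm_div]
      simp only [norm_mul, habs2]
      rw [div_le_iff₀ (by positivity)]
      calc ‖(1 + (t:ℂ) * z)‖ ≤ ‖((t:ℂ) - z)‖ * M := hnum
        _ = M * (1 + t^2)⁻¹ * (‖((t:ℂ) - z)‖ * (1 + t^2)) := by
            field_simp
    have hcont : ContinuousOn f (Iic (0:ℝ)) := by
      apply ContinuousOn.sub
      · apply ContinuousOn.div continuousOn_const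
        · exact (Complex.continuous_ofReal.continuousOn).sub continuousOn_const
        · intro t ht; exact hne t ht
      · apply ContinuousOn.div (Complex.continuous_ofReal.continuousOn)
        · fun_prop
        · intro t ht
          intro h
          have h2 : (t:ℂ) - I ≠ 0 := by
            intro h; have := congrArg Complex.im h; simpa using this
          have h3 : (t:ℂ) + I ≠ 0 := by
            intro h; have := congrArg Complex.im h; simpa using this
          have h5 : ((t:ℂ))^2 + 1 = ((t:ℂ) - I) * ((t:ℂ) + I) := by
            have := Complex.I_sq; linear_combination this
          rw [h5] at h; exact (mul_ne_zero h2 h3) h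
    have hgint : IntegrableOn (fun t : ℝ => M * (1 + t^2)⁻¹) (Iic (0:ℝ)) :=
      (integrable_inv_one_add_sq.const_mul M).integrableOn
    refine hgint.integrable.mono' (hcont.aestronglyMeasurable measurableSet_Iic) ?_
    rw [ae_restrict_iff' measurableSet_Iic]
    filter_upwards with t ht
    simpa using hbound t ht
  -- limit at -infinity
  set e : ℝ := if 0 < z.im then -Real.pi else Real.pi with he
  have hinv : Tendsto (fun t : ℝ => t⁻¹) atBot (nhds 0) := by
    have h := (tendsto_inv_atTop_zero (𝕜 := ℝ)).comp tendsto_neg_atBot_atTop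
    have h2 := h.neg
    simp only [Function.comp_def, inv_neg, neg_neg, neg_zero] at h2
    exact h2
  have harcsin : ∀ (w : ℂ) (b : ℝ),
      Tendsto (fun t : ℝ => Real.arcsin (b / ‖((t:ℂ) - w)‖)) atBot (nhds 0) := by
    intro w b
    have h1 : Tendsto (fun t : ℝ => |t - w.re|) atBot atTop :=
      tendsto_abs_atBot_atTop.comp (tendsto_atBot_add_const_right _ _ tendsto_id)
    have h2 : Tendsto (fun t : ℝ => ‖((t:ℂ) - w)‖) atBot atTop := by
      apply tendsto_atTop_mono _ h1
      intro t
      have := Complex.abs_re_le_norm ((t:ℂ) - w)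
      simpa using this
    have h3 : Tendsto (fun t : ℝ => b / ‖((t:ℂ) - w)‖) atBot (nhds 0) :=
      Tendsto.div_atTop tendsto_const_nhds h2
    have h4 := (Real.continuous_arcsin.tendsto 0).comp h3
    simpa [Function.comp_def, Real.arcsin_zero] using h4
  have hA1 : Tendsto (fun t : ℝ => ((t:ℂ) - I).arg) atBot (nhds (-Real.pi)) := by
    have h := (harcsin I 1).sub_const Real.pi
    rw [zero_sub] at h
    refine h.congr' ?_
    filter_upwards [eventually_lt_atBot (0:ℝ)] with t ht
    have h9 : (-((t:ℂ) - I)).im = 1 := by simp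
    rw [Complex.arg_of_re_neg_of_im_neg (by simpa using ht) (by simp), h9]
  have hA2 : Tendsto (fun t : ℝ => ((t:ℂ) + I).arg) atBot (nhds Real.pi) := by
    have h := (harcsin (-I) (-1)).add_const Real.pi
    rw [zero_add] at h
    refine h.congr' ?_
    filter_upwards [eventually_lt_atBot (0:ℝ)] with t ht
    have h8 : (t:ℂ) - (-I) = (t:ℂ) + I := by ring
    have h9 : (-((t:ℂ) + I)).im = -1 := by simp
    rw [h8, Complex.arg_of_re_neg_of_im_nonneg (by simpa using ht) (by simp), h9]
  have hA3 : Tendsto (fun t : ℝ => ((t:ℂ) - z).arg) atBot (nhds e) := by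
    rcases lt_trichotomy z.im 0 with him | him | him
    · have h := (harcsin z z.im).add_const Real.pi
      rw [zero_add] at h
      have he' : e = Real.pi := by rw [he, if_neg (by linarith)]
      rw [he']
      refine h.congr' ?_
      filter_upwards [eventually_lt_atBot z.re] with t ht
      have h9 : (-((t:ℂ) - z)).im = z.im := by simp
      rw [Complex.arg_of_re_neg_of_im_nonneg
        (by simp only [Complex.sub_re, Complex.ofReal_re]; linarith)
        (by simp only [Complex.sub_im, Complex.ofReal_im, zero_sub]; linarith), h9]
    · have he' : e = Real.pi := by rw [he, if_neg (by rw [him]; exact lt_irrefl 0)]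
      rw [he']
      refine tendsto_const_nhds.congr' ?_
      filter_upwards [eventually_lt_atBot z.re] with t ht
      have heq : (t:ℂ) - z = ((t - z.re : ℝ) : ℂ) := by
        apply Complex.ext <;> simp [him]
      rw [heq, Complex.arg_ofReal_of_neg (by linarith)]
    · have h := (harcsin z z.im).sub_const Real.pi
      rw [zero_sub] at h
      have he' : e = -Real.pi := by rw [he, if_pos him]
      rw [he']
      refine h.congr' ?_
      filter_upwards [eventually_lt_atBot z.re] with t ht
      have h9 : (-((t:ℂ) - z)).im = z.im := by simp
      rw [Complex.arg_of_re_neg_of_im_neg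
        (by simp only [Complex.sub_re, Complex.ofReal_re]; linarith)
        (by simp only [Complex.sub_im, Complex.ofReal_im, zero_sub]; linarith), h9]
  -- rewrite G in terms of real and imaginary parts
  have hlogform : ∀ w : ℂ, Complex.log w
      = ((Real.log (‖w‖) : ℝ) : ℂ) + ((w.arg : ℝ) : ℂ) * I := by
    intro w
    rw [← Complex.re_add_im (Complex.log w), Complex.log_re, Complex.log_im]
  set R : ℝ → ℝ := fun t => Real.log (‖((t:ℂ) - z)‖)
    - (1/2) * Real.log (‖((t:ℂ) - I)‖)
    - (1/2) * Real.log (‖((t:ℂ) + I)‖) with hRdef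
  set T : ℝ → ℝ := fun t => ((t:ℂ) - z).arg - (1/2) * ((t:ℂ) - I).arg
    - (1/2) * ((t:ℂ) + I).arg with hTdef
  have hGRT : ∀ t : ℝ, G t = ((R t : ℝ) : ℂ) + ((T t : ℝ) : ℂ) * I := by
    intro t
    rw [hG, hRdef, hTdef]
    simp only [hlogform]
    push_cast
    ring
  have hT : Tendsto T atBot (nhds e) := by
    have h := (hA3.sub (hA1.const_mul (1/2))).sub (hA2.const_mul (1/2))
    have hval : e - 1/2 * (-Real.pi) - 1/2 * Real.pi = e := by ring
    rw [hval] at h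
    exact h
  have hR : Tendsto R atBot (nhds 0) := by
    have hAB : Tendsto (fun t : ℝ => ((t - z.re)^2 + z.im^2) / (t^2 + 1)) atBot (nhds 1) := by
      set φ : ℝ → ℝ := fun u => ((1 - z.re * u)^2 + (z.im * u)^2) / (1 + u^2) with hφdef
      have hφc : ContinuousAt φ 0 := by
        apply ContinuousAt.div (by fun_prop) (by fun_prop)
        norm_num
      have hφ0 : φ 0 = 1 := by rw [hφdef]; norm_num
      have h := (hφc.tendsto).comp hinv
      rw [hφ0] at h
      refine h.congr' ?_
      filter_upwards [eventually_lt_atBot (0:ℝ)] with t ht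
      have ht0 : t ≠ 0 := ne_of_lt ht
      have h1 : (1:ℝ) + t^2 > 0 := by positivity
      have h2 : (1:ℝ) + (t⁻¹)^2 > 0 := by positivity
      simp only [Function.comp_def, hφdef]
      rw [div_eq_div_iff (by positivity) (by positivity)]
      field_simp
    have h5 := ((Real.continuousAt_log one_ne_zero).tendsto).comp hAB
    rw [Real.log_one] at h5
    have h6 : Tendsto (fun t : ℝ =>
        (1/2) * Real.log (((t - z.re)^2 + z.im^2) / (t^2 + 1))) atBot (nhds ((1/2) * 0)) :=
      h5.const_mul (1/2)
    rw [mul_zero] at h6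
    refine h6.congr' ?_
    filter_upwards [eventually_lt_atBot (min 0 z.re)] with t ht
    rw [lt_min_iff] at ht
    have hA : (0:ℝ) < (t - z.re)^2 + z.im^2 := by
      rcases eq_or_ne z.im 0 with him | him
      · have h7 : t - z.re ≠ 0 := by intro h; rw [sub_eq_zero] at h; linarith [ht.2]
        positivity
      · positivity
    have hB : (0:ℝ) < t^2 + 1 := by positivity
    have habsz : ‖((t:ℂ) - z)‖ = Real.sqrt ((t - z.re)^2 + z.im^2) := by
      rw [Complex.norm_def]
      congr 1
      simp [Complex.normSq_apply]
      ring
    have habsI1 : ‖((t:ℂ) - I)‖ = Real.sqrt (t^2 + 1) := by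
      rw [Complex.norm_def]
      congr 1
      simp [Complex.normSq_apply]
      ring
    have habsI2 : ‖((t:ℂ) + I)‖ = Real.sqrt (t^2 + 1) := by
      rw [Complex.norm_def]
      congr 1
      simp [Complex.normSq_apply]
      ring
    rw [hRdef]
    simp only
    rw [habsz, habsI1, habsI2, Real.log_sqrt hA.le, Real.log_sqrt hB.le,
      Real.log_div hA.ne' hB.ne']
    ring
  have hlim : Tendsto G atBot (nhds ((e : ℂ) * I)) := by
    have h1 : Tendsto (fun t : ℝ => ((R t : ℝ) : ℂ)) atBot (nhds ((0:ℝ) : ℂ)) :=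
      (Complex.continuous_ofReal.tendsto _).comp hR
    have h2 : Tendsto (fun t : ℝ => ((T t : ℝ) : ℂ)) atBot (nhds ((e:ℝ) : ℂ)) :=
      (Complex.continuous_ofReal.tendsto _).comp hT
    have h3 := h1.add (h2.mul_const I)
    rw [Complex.ofReal_zero, zero_add] at h3
    exact Tendsto.congr (fun t => (hGRT t).symm) h3
  have hFTC := integral_Iic_of_hasDerivAt_of_tendsto' hderiv hint hlim
  rw [hf] at hFTC
  rw [hFTC]
  -- G 0 = log (-z)
  have hG0 : G 0 = Complex.log (-z) := by
    rw [hG]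
    simp only [Complex.ofReal_zero, zero_sub, zero_add]
    rw [Complex.log_neg_I, Complex.log_I]
    ring
  rw [hG0]
  -- log(-z) = log z + e*I
  have hlogneg : Complex.log (-z) = Complex.log z + (e:ℂ) * I := by
    have hz0 : z ≠ 0 := by
      intro h; exact hz (by simp [h])
    apply Complex.ext
    · simp [Complex.log_re, Complex.add_re, Complex.mul_re]
    · simp only [Complex.log_im, Complex.add_im, Complex.mul_im, Complex.ofReal_re,
        Complex.ofReal_im, Complex.I_im, Complex.I_re, Complex.log_im]
      rcases lt_trichotomy z.im 0 with him | him | him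
      · rw [Complex.arg_neg_eq_arg_add_pi_of_im_neg him, he]
        rw [if_neg (by linarith)]; ring
      · have hzr : 0 < z.re := hzre him
        have hzeq : z = (z.re : ℂ) := Complex.ext (by simp) (by simp [him])
        rw [he, if_neg (by rw [him]; exact lt_irrefl 0)]
        rw [hzeq, ← Complex.ofReal_neg, Complex.arg_ofReal_of_neg (by linarith),
          Complex.arg_ofReal_of_nonneg (by linarith)]
        ring
      · rw [Complex.arg_neg_eq_arg_sub_pi_of_im_pos him, he, if_pos him]; ring
  rw [hlogneg]; ring
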